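/- arXiv:1311.0351 — 5 statements merged into one kernel-verified Lean document; each statement's English description precedes it below -/
import Mathlib

section
/- If X and Y are definable sets with respect to a covering C, then X ∩ Y is a definable set with respect to C. -/
variable {α : Type*}

/-- `C` is a covering of `U`: every member is nonempty and their union is `U`. -/
def IsCovering (U : Set α) (C : Set (Set α)) : Prop :=
  (∀ K ∈ C, K.Nonempty) ∧ ⋃₀ C = U

/-- The neighborhood of `x`: intersection of all members of `C` containing `x`. -/
def nbhd (C : Set (Set α)) (x : α) : Set α :=
  ⋂₀ {K | K ∈ C ∧ x ∈ K}

/-- `X` is definable w.r.t. `C` if it is the union of the neighborhoods of its points. -/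
def Definable (C : Set (Set α)) (X : Set α) : Prop :=
  X = ⋃ x ∈ X, nbhd C x

/-- The family of all definable subsets of `U` w.r.t. `C`. -/
def DefinableSets (U : Set α) (C : Set (Set α)) : Set (Set α) :=
  {X | X ⊆ U ∧ Definable C X}

/-- Covering-based lower approximation. -/
def lowerApprox (U : Set α) (C : Set (Set α)) (X : Set α) : Set α :=
  {x ∈ U | nbhd C x ⊆ X}

/-- Covering-based upper approximation. -/
def upperApprox (U : Set α) (C : Set (Set α)) (X : Set α) : Set α :=
  {x ∈ U | (nbhd C x ∩ X).Nonempty}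

/-- Rough matroid based on a covering `C` of `U`. -/
def RoughMatroid (U : Set α) (C : Set (Set α)) (I : Set (Set α)) : Prop :=
  I ⊆ DefinableSets U C ∧
  ∅ ∈ I ∧
  (∀ I₀ ∈ I, ∀ I', I' ⊆ I₀ → I' ∈ DefinableSets U C → I' ∈ I) ∧
  (∀ I₁ ∈ I, ∀ I₂ ∈ I, I₁.ncard < I₂.ncard →
    ∃ I₀ ∈ I, I₁ ⊂ I₀ ∧ I₀ ⊆ I₁ ∪ I₂)

/-- Matroid independence axioms (I1)-(I3). -/
def MatroidInd (I : Set (Set α)) : Prop :=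
  ∅ ∈ I ∧
  (∀ X ∈ I, ∀ Y, Y ⊆ X → Y ∈ I) ∧
  (∀ I₁ ∈ I, ∀ I₂ ∈ I, I₁.ncard < I₂.ncard →
    ∃ e ∈ I₂ \ I₁, insert e I₁ ∈ I)

lemma mem_nbhd_self (C : Set (Set α)) (x : α) : x ∈ nbhd C x := by
  intro K hK; exact hK.2

lemma nbhd_subset_of_def {C : Set (Set α)} {X : Set α} (h : Definable C X)
    {x : α} (hx : x ∈ X) : nbhd C x ⊆ X := by
  intro y hy
  rw [h]
  exact Set.mem_biUnion hx hy

theorem definable_inter {U : Set α} {C : Set (Set α)} (hU : U.Finite)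
    (hC : IsCovering U C) {X Y : Set α}
    (hX : X ∈ DefinableSets U C) (hY : Y ∈ DefinableSets U C) :
    X ∩ Y ∈ DefinableSets U C := by
  refine ⟨fun x hx => hX.1 hx.1, ?_⟩
  apply Set.eq_of_subset_of_subset
  · intro x hx
    exact Set.mem_biUnion hx (mem_nbhd_self C x)
  · intro y hy
    simp only [Set.mem_iUnion] at hy
    obtain ⟨x, hx, hyx⟩ := hy
    exact ⟨nbhd_subset_of_def hX.2 hx.1 hyx, nbhd_subset_of_def hY.2 hx.2 hyx⟩
end

section
/- The family D(U, C) of all definable sets with respect to a covering C, ordered by set inclusion, forms a lattice (with join given by union and meet given by intersection). -/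
variable {α : Type*}

lemma definable_iff {C : Set (Set α)} {X : Set α} :
    Definable C X ↔ ∀ x ∈ X, nbhd C x ⊆ X := by
  constructor
  · intro h x hx
    intro y hy
    rw [h]
    exact Set.mem_biUnion hx hy
  · intro h
    apply Set.Subset.antisymm
    · intro x hx; exact Set.mem_biUnion hx (mem_nbhd_self C x)
    · exact Set.iUnion₂_subset h

theorem definableSets_lattice {U : Set α} {C : Set (Set α)} (hU : U.Finite)
    (hC : IsCovering U C) :
    ∃ inst : Lattice (DefinableSets U C),
      (∀ a b : DefinableSets U C, inst.le a b ↔ (a : Set α) ⊆ (b : Set α)) ∧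
      (∀ a b : DefinableSets U C, ((inst.sup a b : DefinableSets U C) : Set α) = ↑a ∪ ↑b) ∧
      (∀ a b : DefinableSets U C, ((inst.inf a b : DefinableSets U C) : Set α) = ↑a ∩ ↑b) := by
  have hsup : ∀ X ∈ DefinableSets U C, ∀ Y ∈ DefinableSets U C,
      X ∪ Y ∈ DefinableSets U C := by
    intro X hX Y hY
    refine ⟨Set.union_subset hX.1 hY.1, definable_iff.mpr ?_⟩
    rintro x (hx | hx)
    · exact (definable_iff.mp hX.2 x hx).trans Set.subset_union_left
    · exact (definable_iff.mp hY.2 x hx).trans Set.subset_union_right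
  have hinf : ∀ X ∈ DefinableSets U C, ∀ Y ∈ DefinableSets U C,
      X ∩ Y ∈ DefinableSets U C := by
    intro X hX Y hY
    refine ⟨(Set.inter_subset_left).trans hX.1, definable_iff.mpr ?_⟩
    intro x hx
    exact Set.subset_inter (definable_iff.mp hX.2 x hx.1) (definable_iff.mp hY.2 x hx.2)
  let S : Sublattice (Set α) :=
    { carrier := DefinableSets U C
      supClosed' := fun X hX Y hY => hsup X hX Y hY
      infClosed' := fun X hX Y hY => hinf X hX Y hY }
  refine ⟨S.instLatticeCoe, fun a b => Iff.rfl, fun a b => rfl, fun a b => rfl⟩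
end

section
/- Let M_C = (U, I_C) be a rough matroid based on a covering C. Then I_C satisfies the matroid independence axioms (I1)–(I3) if and only if N_C(x) = {x} for every x ∈ ⋃ I_C. -/
variable {α : Type*}

lemma definable_of_singletons {C : Set (Set α)} {Y : Set α}
    (h : ∀ y ∈ Y, nbhd C y = {y}) : Definable C Y := by
  ext z
  simp only [Set.mem_iUnion]
  constructor
  · intro hz; exact ⟨z, hz, by rw [h z hz]; rfl⟩
  · rintro ⟨w, hw, hzw⟩
    rw [h w hw] at hzw
    cases hzw; exact hw

theorem roughMatroid_matroidInd_iff {U : Set α} {C : Set (Set α)} (hU : U.Finite)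
    (hC : IsCovering U C) {I : Set (Set α)} (hM : RoughMatroid U C I) :
    MatroidInd I ↔ ∀ x ∈ ⋃₀ I, nbhd C x = {x} := by
  obtain ⟨hsub, hempty, hher, hex⟩ := hM
  constructor
  · rintro ⟨-, h2, -⟩ x ⟨X, hX, hxX⟩
    have hx : {x} ∈ I := h2 X hX {x} (Set.singleton_subset_iff.2 hxX)
    have hd := (hsub hx).2
    unfold Definable at hd
    rw [Set.biUnion_singleton] at hd
    exact hd.symm
  · intro h
    have her : ∀ X ∈ I, ∀ Y, Y ⊆ X → Y ∈ I := by
      intro X hX Y hY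
      refine hher X hX Y hY ⟨hY.trans (hsub hX).1, ?_⟩
      exact definable_of_singletons fun y hy => h y ⟨X, hX, hY hy⟩
    refine ⟨hempty, her, ?_⟩
    intro I₁ h1 I₂ h2c hlt
    obtain ⟨I₀, h0, hss, hsub'⟩ := hex I₁ h1 I₂ h2c hlt
    obtain ⟨e, he0, he1⟩ := Set.exists_of_ssubset hss
    have heI2 : e ∈ I₂ := (hsub' he0).resolve_left he1
    exact ⟨e, ⟨heI2, he1⟩, her I₀ h0 _ (Set.insert_subset he0 hss.subset)⟩
end

section
/- Let C be a covering of U and I_C ⊆ D(U, C) satisfying (CI1) and (CI2). Then (U, I_C) is a rough matroid based on C (i.e., also satisfies (CI3)) if and only if for every definable set D ∈ D(U, C), all maximal elements of {I ∈ I_C : I ⊆ D} have the same cardinality. -/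
variable {α : Type*}

lemma definable_union {C : Set (Set α)} {X Y : Set α}
    (hX : Definable C X) (hY : Definable C Y) : Definable C (X ∪ Y) := by
  rw [definable_iff] at *
  rintro x (hx | hx)
  · exact (hX x hx).trans Set.subset_union_left
  · exact (hY x hx).trans Set.subset_union_right

theorem roughMatroid_iff_maximal_same_card {U : Set α} {C : Set (Set α)}
    (hU : U.Finite) (hC : IsCovering U C) {I : Set (Set α)}
    (hsub : I ⊆ DefinableSets U C)
    (h1 : ∅ ∈ I)
    (h2 : ∀ I₀ ∈ I, ∀ I', I' ⊆ I₀ → I' ∈ DefinableSets U C → I' ∈ I) :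
    RoughMatroid U C I ↔
      ∀ D ∈ DefinableSets U C, ∀ A B : Set α,
        (A ∈ I ∧ A ⊆ D ∧ ∀ A' ∈ I, A' ⊆ D → A ⊆ A' → A = A') →
        (B ∈ I ∧ B ⊆ D ∧ ∀ B' ∈ I, B' ⊆ D → B ⊆ B' → B = B') →
        A.ncard = B.ncard := by

  have hfin : ∀ J ∈ I, J.Finite := fun J hJ => hU.subset (hsub hJ).1
  constructor
  · rintro ⟨-, -, -, h3⟩ D hD A B ⟨hAI, hAD, hAmax⟩ ⟨hBI, hBD, hBmax⟩
    by_contra hne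
    rcases Nat.lt_or_ge A.ncard B.ncard with h | h
    · obtain ⟨I₀, hI₀I, hAsub, hI₀sub⟩ := h3 A hAI B hBI h
      exact hAsub.ne (hAmax I₀ hI₀I (hI₀sub.trans (Set.union_subset hAD hBD)) hAsub.subset)
    · have h' : B.ncard < A.ncard := lt_of_le_of_ne h fun e => hne e.symm
      obtain ⟨I₀, hI₀I, hBsub, hI₀sub⟩ := h3 B hBI A hAI h'
      exact hBsub.ne (hBmax I₀ hI₀I (hI₀sub.trans (Set.union_subset hBD hAD)) hBsub.subset)
  · intro hmax
    refine ⟨hsub, h1, h2, ?_⟩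
    intro I₁ hI₁ I₂ hI₂ hlt
    set D := I₁ ∪ I₂ with hDdefn
    have hDdef : D ∈ DefinableSets U C := by
      have d1 := hsub hI₁; have d2 := hsub hI₂
      exact ⟨Set.union_subset d1.1 d2.1, definable_union d1.2 d2.2⟩
    have hfam : ∀ E : Set α, {J | J ∈ I ∧ E ⊆ J ∧ J ⊆ D}.Finite := by
      intro E
      apply hU.finite_subsets.subset
      intro J hJ; exact (hsub hJ.1).1
    have hmaxmk : ∀ E ∈ I, E ⊆ D → ∃ A, (A ∈ I ∧ E ⊆ A ∧ A ⊆ D) ∧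
        (∀ A' ∈ I, A' ⊆ D → A ⊆ A' → A = A') := by
      intro E hE hED
      obtain ⟨A, ⟨hAI, hEA, hAD⟩, hm⟩ := (hfam E).exists_maximalFor Set.ncard _
        ⟨E, hE, subset_rfl, hED⟩
      refine ⟨A, ⟨hAI, hEA, hAD⟩, ?_⟩
      intro A' hA' hA'D hAA'
      have hcard := @hm A' ⟨hA', hEA.trans hAA', hA'D⟩
        (Set.ncard_le_ncard hAA' (hfin A' hA'))
      exact Set.eq_of_subset_of_ncard_le hAA' hcard.ge (hfin A' hA')
    obtain ⟨A, ⟨hAI, hI₁A, hAD⟩, hAm⟩ := hmaxmk I₁ hI₁ Set.subset_union_left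
    obtain ⟨B, ⟨hBI, hI₂B, hBD⟩, hBm⟩ := hmaxmk I₂ hI₂ Set.subset_union_right
    have hAB : A.ncard = B.ncard := hmax D hDdef A B ⟨hAI, hAD, hAm⟩ ⟨hBI, hBD, hBm⟩
    have hlt' : I₁.ncard < A.ncard := by
      have : I₂.ncard ≤ B.ncard := Set.ncard_le_ncard hI₂B (hfin B hBI)
      omega
    refine ⟨A, hAI, ⟨hI₁A, ?_⟩, hAD⟩
    intro hAI₁
    have := Set.ncard_le_ncard hAI₁ (hfin I₁ hI₁)
    omega
end

section
/- Let C be a covering of U. For any X ⊆ U, the union ⋃_{x∈X} N_C(x) is the smallest definable set with respect to C containing X. -/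
variable {α : Type*}

lemma nbhd_mono {C : Set (Set α)} {x y : α} (h : y ∈ nbhd C x) :
    nbhd C y ⊆ nbhd C x := by
  intro z hz K hK
  exact hz K ⟨hK.1, h K hK⟩

lemma nbhd_subset_of_mem {C : Set (Set α)} {U : Set α} (hC : IsCovering U C)
    {x : α} (hx : x ∈ U) : nbhd C x ⊆ U := by
  rw [← hC.2] at hx
  obtain ⟨K, hK, hxK⟩ := hx
  intro z hz
  rw [← hC.2]
  exact ⟨K, hK, hz K ⟨hK, hxK⟩⟩

theorem nbhd_union_smallest_definable {U : Set α} {C : Set (Set α)} (hU : U.Finite)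
    (hC : IsCovering U C) {X : Set α} (hX : X ⊆ U) :
    (⋃ x ∈ X, nbhd C x) ∈ DefinableSets U C ∧
    X ⊆ ⋃ x ∈ X, nbhd C x ∧
    ∀ Y ∈ DefinableSets U C, X ⊆ Y → (⋃ x ∈ X, nbhd C x) ⊆ Y := by
  constructor
  · constructor
    · intro y hy
      simp only [Set.mem_iUnion] at hy
      obtain ⟨x, hx, hy⟩ := hy
      exact nbhd_subset_of_mem hC (hX hx) hy
    · apply Set.Subset.antisymm
      · intro y hy
        exact Set.mem_iUnion₂.2 ⟨y, hy, mem_nbhd_self C y⟩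
      · intro z hz
        obtain ⟨y, hy, hz⟩ := Set.mem_iUnion₂.1 hz
        obtain ⟨x, hx, hy⟩ := Set.mem_iUnion₂.1 hy
        exact Set.mem_iUnion₂.2 ⟨x, hx, nbhd_mono hy hz⟩
  refine ⟨fun x hx => Set.mem_iUnion₂.2 ⟨x, hx, mem_nbhd_self C x⟩, ?_⟩
  intro Y hY hXY z hz
  obtain ⟨x, hx, hz⟩ := Set.mem_iUnion₂.1 hz
  have hxY := hXY hx
  rw [hY.2]
  exact Set.mem_iUnion₂.2 ⟨x, hxY, hz⟩
end
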